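/- Let n > m > 0 be coprime integers and let [b₁; b₂, …, b_r] be the regular (Euclidean) continued fraction of n/m with b_r > 1. Then for any integer continued fraction expansion n/m = [c₁; c₂, …, c_s] (arbitrary nonzero integer coefficients), one has Σᵢ₌₁ˢ (|cᵢ| + 1) ≥ Σᵢ₌₁ʳ (bᵢ + 1). That is, the Euclidean continued fraction minimizes the total cost Σ(|coefficient| + 1) among all integer continued fraction representations. -/

import Mathlib

/-- Value of a finite continued fraction with integer coefficients. -/
def cfVal : List ℤ → ℚ
  | [] => 0
  | [a] => (a : ℚ)
  | a :: b :: l => (a : ℚ) + 1 / cfVal (b :: l)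

/-- A continued fraction expansion is valid if every intermediate denominator,
i.e. the value of every proper nonempty suffix, is nonzero. -/
def ValidCF (l : List ℤ) : Prop :=
  ∀ t : List ℤ, t ≠ [] → t <:+ l → t ≠ l → cfVal t ≠ 0

def psiN (p q : ℕ) : ℤ :=
  if h : q = 0 then 0 else (p / q : ℕ) + 1 + psiN q (p % q)
termination_by q
decreasing_by exact Nat.mod_lt _ (Nat.pos_of_ne_zero h)

lemma psiN_zero (p : ℕ) : psiN p 0 = 0 := by rw [psiN]; simp

lemma psiN_pos {q : ℕ} (p : ℕ) (h : q ≠ 0) :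
    psiN p q = (p / q : ℕ) + 1 + psiN q (p % q) := by rw [psiN]; simp [h]

lemma psiN_nonneg (q p : ℕ) : 0 ≤ psiN p q := by
  induction q using Nat.strong_induction_on generalizing p with
  | _ q ih =>
    rcases Nat.eq_zero_or_pos q with h | h
    · simp [h, psiN_zero]
    · rw [psiN_pos p h.ne']
      have := ih (p % q) (Nat.mod_lt _ h) q
      positivity

lemma psiN_add {q : ℕ} (u : ℕ) (h : q ≠ 0) : psiN (u + q) q = 1 + psiN u q := by
  rw [psiN_pos _ h, psiN_pos u h, Nat.add_div_right _ (Nat.pos_of_ne_zero h),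
    Nat.add_mod_right]
  push_cast
  ring

lemma psiN_mul_add {q : ℕ} (k u : ℕ) (h : q ≠ 0) :
    psiN (k * q + u) q = k + psiN u q := by
  induction k with
  | zero => simp
  | succ k ih =>
    have : (k + 1) * q + u = (k * q + u) + q := by ring
    rw [this, psiN_add _ h, ih]
    push_cast
    ring

lemma psiN_swap {p : ℕ} (q : ℕ) (hp : p ≠ 0) : psiN q p ≤ 1 + psiN p q := by
  rcases Nat.eq_zero_or_pos q with hq | hq
  · subst hq
    rw [psiN_pos 0 hp]
    simp [psiN_zero]
  rcases lt_trichotomy p q with h | h | h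
  · rw [psiN_pos p hq.ne', Nat.div_eq_of_lt h, Nat.mod_eq_of_lt h]
    have := psiN_nonneg p q
    have := psiN_nonneg q p
    push_cast
    linarith
  · subst h
    rw [psiN_pos p hp, Nat.div_self (Nat.pos_of_ne_zero hp), Nat.mod_self, psiN_zero]
    have := psiN_nonneg p p
    linarith [psiN_nonneg p p]
  · rw [psiN_pos q hp, Nat.div_eq_of_lt h, Nat.mod_eq_of_lt h]
    push_cast
    linarith [le_refl (psiN p q)]

lemma natAbs_eq_of_cast {z : ℤ} {n : ℕ} (h : z = (n : ℤ)) : z.natAbs = n := by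
  subst h; exact Int.natAbs_natCast n

lemma psiN_compl_eq {p r : ℕ} (hr : r ≠ 0) (h : 2 * r < p) :
    psiN p (p - r) = 1 + psiN p r := by
  obtain ⟨s, rfl⟩ : ∃ s, p = r + s := ⟨p - r, by omega⟩
  have h1 : r < s := by omega
  have h2 : s ≠ 0 := by omega
  have h3 : r + s - r = s := by omega
  rw [h3]
  have e1 : psiN (r + s) s = 2 + psiN s r := by
    rw [psiN_pos _ h2, Nat.add_div_right _ (Nat.pos_of_ne_zero h2),
      Nat.add_mod_right, Nat.div_eq_of_lt h1, Nat.mod_eq_of_lt h1]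
    push_cast; ring
  have e2 : psiN (r + s) r = 1 + psiN s r := by
    rw [Nat.add_comm r s, psiN_add _ hr]
  omega

lemma psiN_compl_le {p r : ℕ} (hr : r ≠ 0) (h : r < p) :
    psiN p (p - r) ≤ 1 + psiN p r := by
  rcases lt_trichotomy (2 * r) p with h2 | h2 | h2
  · rw [psiN_compl_eq hr h2]
  · have : p - r = r := by omega
    rw [this]
    linarith [psiN_nonneg r p]
  · have h3 : p - r ≠ 0 := by omega
    have h4 : 2 * (p - r) < p := by omega
    have := psiN_compl_eq h3 h4
    have h5 : p - (p - r) = r := by omega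
    rw [h5] at this
    omega

lemma psiN_key {p : ℕ} (q : ℕ) (hp : p ≠ 0) (b : ℤ) :
    psiN (b * p + q).natAbs p ≤ |b| + 1 + psiN p q := by
  have hswap := psiN_swap (p := p) q hp
  rcases lt_trichotomy b 0 with hb | hb | hb
  · -- b negative
    obtain ⟨k, rfl⟩ : ∃ k : ℕ, b = -(k : ℤ) := ⟨(-b).toNat, by omega⟩
    have hk1 : 1 ≤ k := by omega
    have habs : |(-(k : ℤ))| = (k : ℤ) := by
      rw [abs_neg, abs_of_nonneg (by positivity)]
    rw [habs]
    rcases le_or_gt (k * p) q with hle | hlt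
    · have hna : (-(k : ℤ) * p + q).natAbs = q - k * p := by
        apply natAbs_eq_of_cast
        push_cast [hle]
        ring
      rw [hna]
      have hq : q = k * p + (q - k * p) := by omega
      have e1 : psiN q p = k + psiN (q - k * p) p := by
        conv_lhs => rw [hq]
        exact psiN_mul_add k _ hp
      have hk' : (1 : ℤ) ≤ k := by exact_mod_cast hk1
      linarith
    · have hna : (-(k : ℤ) * p + q).natAbs = k * p - q := by
        have : -(k : ℤ) * p + q = -((k * p - q : ℕ) : ℤ) := by
          push_cast [le_of_lt hlt]
          ring
        rw [this, Int.natAbs_neg]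
        exact natAbs_eq_of_cast rfl
      rw [hna]
      have hm : p * (q / p) + q % p = q := Nat.div_add_mod q p
      obtain ⟨m, r, hqd, hrp⟩ : ∃ m r, q = m * p + r ∧ r < p :=
        ⟨q / p, q % p, by rw [Nat.mul_comm]; exact hm.symm,
          Nat.mod_lt _ (Nat.pos_of_ne_zero hp)⟩
      have hmk : m < k := by
        by_contra hc
        push_neg at hc
        have : k * p ≤ m * p := Nat.mul_le_mul_right _ hc
        omega
      rcases Nat.eq_zero_or_pos r with hr0 | hr0
      · -- r = 0
        have e1 : k * p - q = (k - m) * p + 0 := by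
          rw [Nat.sub_mul]; omega
        rw [e1, psiN_mul_add _ _ hp, psiN_pos 0 hp, Nat.zero_div, Nat.zero_mod,
          psiN_zero]
        have h0 : (0:ℤ) ≤ psiN p q := psiN_nonneg q p
        have hc : ((k - m : ℕ) : ℤ) ≤ (k : ℤ) := by
          have : k - m ≤ k := Nat.sub_le _ _
          exact_mod_cast this
        push_cast
        linarith
      · -- r ≥ 1
        have hkj : k = (k - m - 1) + m + 1 := by omega
        obtain ⟨j, hkj⟩ : ∃ j, k = j + m + 1 := ⟨k - m - 1, hkj⟩
        have e1 : k * p - q = j * p + (p - r) := by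
          have h1 : k * p = j * p + m * p + p := by rw [hkj]; ring
          omega
        have hpr1 : p - r ≠ 0 := by omega
        have hprlt : p - r < p := by omega
        have lhs_eq : psiN (k * p - q) p = j + 1 + psiN p (p - r) := by
          rw [e1, psiN_mul_add _ _ hp, psiN_pos _ hp, Nat.div_eq_of_lt hprlt,
            Nat.mod_eq_of_lt hprlt]
          push_cast; ring
        have F := psiN_compl_le (p := p) (r := r) (by omega) hrp
        have hkcast : (k : ℤ) = j + m + 1 := by exact_mod_cast hkj
        rcases Nat.eq_zero_or_pos m with hm0 | hm0
        · -- m = 0, q = r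
          have hqr : q = r := by rw [hm0] at hqd; omega
          rw [lhs_eq, hqr, hkcast]
          push_cast [hm0] at hkcast ⊢
          linarith
        · -- m ≥ 1, q > p
          have hqp : p < q := by nlinarith
          have rhs_eq : psiN p q = m + 2 + psiN p r := by
            rw [psiN_pos p (by omega), Nat.div_eq_of_lt hqp, Nat.mod_eq_of_lt hqp]
            have e2 : psiN q p = m + psiN r p := by
              conv_lhs => rw [hqd]
              exact psiN_mul_add m r hp
            rw [e2, psiN_pos r hp, Nat.div_eq_of_lt hrp, Nat.mod_eq_of_lt hrp]
            push_cast; ring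
          rw [lhs_eq, rhs_eq, hkcast]
          have h0 : (0:ℤ) ≤ psiN p r := psiN_nonneg r p
          have hm0' : (1:ℤ) ≤ m := by exact_mod_cast hm0
          linarith
  · subst hb
    simp only [zero_mul, zero_add, Int.natAbs_natCast, abs_zero]
    linarith
  · obtain ⟨k, rfl⟩ : ∃ k : ℕ, b = (k : ℤ) := ⟨b.toNat, by omega⟩
    have habs : |(k : ℤ)| = (k : ℤ) := abs_of_nonneg (by positivity)
    have hna : ((k : ℤ) * p + q).natAbs = k * p + q := by
      apply natAbs_eq_of_cast
      push_cast
      ring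
    rw [hna, habs, psiN_mul_add _ _ hp]
    linarith

def psi (x : ℚ) : ℤ := psiN x.num.natAbs x.den

lemma psi_neg (x : ℚ) : psi (-x) = psi x := by
  simp [psi]

lemma psi_intCast (k : ℤ) : psi (k : ℚ) = |k| + 1 := by
  have h1 : ((k : ℚ)).num = k := Rat.num_intCast k
  have h2 : ((k : ℚ)).den = 1 := Rat.den_intCast k
  rw [psi, h1, h2, psiN_pos _ one_ne_zero, Nat.div_one, Nat.mod_one, psiN_zero,
    Int.abs_eq_natAbs]
  ring

lemma psi_div {u v : ℤ} (hv : 0 < v) (h : Nat.Coprime u.natAbs v.natAbs) :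
    psi ((u : ℚ) / (v : ℚ)) = psiN u.natAbs v.natAbs := by
  have h1 := Rat.num_div_eq_of_coprime hv h
  have h2 := Rat.den_div_eq_of_coprime hv h
  rw [psi, h1]
  congr 1
  omega

lemma num_form {a : ℤ} {y : ℚ} (hy : 0 < y) :
    (a : ℚ) + 1 / y = ((a * y.num + y.den : ℤ) : ℚ) / ((y.num : ℤ) : ℚ) := by
  have hnum : (0 : ℚ) < (y.num : ℚ) := by exact_mod_cast Rat.num_pos.mpr hy
  have hden : (0 : ℚ) < (y.den : ℚ) := by
    exact_mod_cast Nat.pos_of_ne_zero y.den_nz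
  conv_lhs => rw [← Rat.num_div_den y, one_div_div]
  field_simp
  norm_cast

lemma cop_form (a : ℤ) (y : ℚ) :
    Nat.Coprime (a * y.num + y.den).natAbs y.num.natAbs := by
  have h1 : IsCoprime (y.den : ℤ) y.num := by
    rw [Int.isCoprime_iff_gcd_eq_one, Int.gcd, Int.natAbs_natCast, Nat.gcd_comm]
    exact y.reduced
  have h2 : IsCoprime ((y.den : ℤ) + y.num * a) y.num := h1.add_mul_left_left a
  have h3 : (y.den : ℤ) + y.num * a = a * y.num + y.den := by ring
  rw [h3] at h2
  rw [Int.isCoprime_iff_gcd_eq_one] at h2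
  exact h2

lemma psi_step_pos (a : ℤ) (y : ℚ) (hy : 0 < y) :
    psi ((a : ℚ) + 1 / y) ≤ |a| + 1 + psi y := by
  have hnum : 0 < y.num := Rat.num_pos.mpr hy
  have hP : y.num.natAbs ≠ 0 := by omega
  have hcast : ((y.num.natAbs : ℤ)) = y.num := Int.natAbs_of_nonneg hnum.le
  rw [num_form hy, psi_div hnum (cop_form a y)]
  have key := psiN_key (p := y.num.natAbs) y.den hP a
  rw [hcast] at key
  have : psi y = psiN y.num.natAbs y.den := rfl
  rw [this]
  exact key

lemma psi_step (a : ℤ) (y : ℚ) (hy : y ≠ 0) :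
    psi ((a : ℚ) + 1 / y) ≤ |a| + 1 + psi y := by
  rcases lt_or_gt_of_ne hy with hneg | hpos
  · have h1 : (a : ℚ) + 1 / y = -(((-a : ℤ) : ℚ) + 1 / (-y)) := by
      push_cast
      ring
    rw [h1, psi_neg]
    have := psi_step_pos (-a) (-y) (by linarith)
    rw [psi_neg] at this
    simpa [abs_neg] using this
  · exact psi_step_pos a y hpos

lemma psi_step_eq (a : ℤ) (ha : 1 ≤ a) (y : ℚ) (hy : 1 < y) :
    psi ((a : ℚ) + 1 / y) = a + 1 + psi y := by
  have hy0 : 0 < y := by linarith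
  have hnum : 0 < y.num := Rat.num_pos.mpr hy0
  have hcast : ((y.num.natAbs : ℤ)) = y.num := Int.natAbs_of_nonneg hnum.le
  have hdlt : (y.den : ℤ) < y.num := by
    have hden : (0 : ℚ) < (y.den : ℚ) := by
      exact_mod_cast Nat.pos_of_ne_zero y.den_nz
    have hy' : y = (y.num : ℚ) / (y.den : ℚ) := (Rat.num_div_den y).symm
    rw [hy', lt_div_iff₀ hden, one_mul] at hy
    exact_mod_cast hy
  have hqP : y.den < y.num.natAbs := by omega
  rw [num_form hy0, psi_div hnum (cop_form a y)]
  have hna : (a * y.num + y.den).natAbs = a.toNat * y.num.natAbs + y.den := by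
    apply natAbs_eq_of_cast
    push_cast [hcast]
    rw [Int.toNat_of_nonneg (by linarith)]
  rw [hna, psiN_mul_add _ _ (by omega), psiN_pos _ (by omega),
    Nat.div_eq_of_lt hqP, Nat.mod_eq_of_lt hqP]
  have : psi y = psiN y.num.natAbs y.den := rfl
  rw [this]
  have : ((a.toNat : ℤ)) = a := Int.toNat_of_nonneg (by linarith)
  rw [this]
  push_cast
  ring

lemma getLast!_cons_cons (a b : ℤ) (l : List ℤ) :
    (a::b::l).getLast! = (b::l).getLast! := by
  rw [List.getLast!_eq_getElem!, List.getLast!_eq_getElem!]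
  simp [List.getElem!_cons_succ]

lemma cfVal_cons (a : ℤ) {t : List ℤ} (ht : t ≠ []) :
    cfVal (a :: t) = (a : ℚ) + 1 / cfVal t := by
  cases t with
  | nil => exact absurd rfl ht
  | cons b l => rfl

lemma validCF_tail {a : ℤ} {t : List ℤ} (h : ValidCF (a :: t)) : ValidCF t := by
  intro s hs hsuf hne
  refine h s hs (hsuf.trans (List.suffix_cons a t)) ?_
  intro he
  have := hsuf.length_le
  rw [he] at this
  simp at this

lemma cost_ge : ∀ c : List ℤ, c ≠ [] → ValidCF c →
    psi (cfVal c) ≤ ((c.map (fun x => |x| + 1)).sum : ℤ) := by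
  intro c
  induction c with
  | nil => intro h; exact absurd rfl h
  | cons a t ih =>
    intro _ hvalid
    cases t with
    | nil =>
      simp only [cfVal, List.map_cons, List.map_nil, List.sum_cons, List.sum_nil,
        add_zero]
      rw [psi_intCast]
    | cons b l =>
      have ht : (b :: l) ≠ [] := by simp
      have htv : cfVal (b :: l) ≠ 0 := by
        refine hvalid (b :: l) ht (List.suffix_cons a _) ?_
        intro he
        have := congrArg List.length he
        simp at this
      have := ih ht (validCF_tail hvalid)
      have hstep := psi_step a (cfVal (b :: l)) htv
      rw [cfVal_cons a ht]
      simp only [List.map_cons, List.sum_cons] at this ⊢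
      linarith

lemma pos_val_gt_one : ∀ b : List ℤ, b ≠ [] → (∀ x ∈ b, 0 < x) →
    1 < b.getLast! → 1 < cfVal b := by
  intro b
  induction b with
  | nil => intro h; exact absurd rfl h
  | cons a t ih =>
    intro _ hpos hlast
    cases t with
    | nil =>
      simp only [cfVal]
      have : a = [a].getLast! := rfl
      exact_mod_cast (this ▸ hlast)
    | cons b l =>
      have ht : (b :: l) ≠ [] := by simp
      have hlast' : 1 < (b :: l).getLast! := by
        rwa [getLast!_cons_cons] at hlast
      have hv := ih ht (fun x hx => hpos x (List.mem_cons_of_mem a hx)) hlast'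
      have ha : 0 < a := hpos a List.mem_cons_self
      have ha1 : (1 : ℚ) ≤ (a : ℚ) := by exact_mod_cast ha
      have hinv : (0 : ℚ) < 1 / cfVal (b :: l) := by positivity
      rw [cfVal_cons a ht]
      linarith

lemma euclid_cost : ∀ b : List ℤ, b ≠ [] → (∀ x ∈ b, 0 < x) →
    (b.length = 1 ∨ 1 < b.getLast!) →
    ((b.map (fun x => |x| + 1)).sum : ℤ) = psi (cfVal b) := by
  intro b
  induction b with
  | nil => intro h; exact absurd rfl h
  | cons a t ih =>
    intro _ hpos hlast
    cases t with
    | nil =>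
      simp only [cfVal, List.map_cons, List.map_nil, List.sum_cons, List.sum_nil,
        add_zero]
      rw [psi_intCast]
    | cons b l =>
      have ht : (b :: l) ≠ [] := by simp
      have hlen : (a :: b :: l).length ≠ 1 := by simp
      have hlast0 : 1 < (a :: b :: l).getLast! := hlast.resolve_left hlen
      have hlast' : 1 < (b :: l).getLast! := by
        rwa [getLast!_cons_cons] at hlast0
      have hpos' : ∀ x ∈ b :: l, 0 < x := fun x hx =>
        hpos x (List.mem_cons_of_mem a hx)
      have hv := pos_val_gt_one (b :: l) ht hpos' hlast'
      have ha : 0 < a := hpos a List.mem_cons_self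
      have ih' := ih ht hpos' (Or.inr hlast')
      rw [cfVal_cons a ht, psi_step_eq a (by omega) _ hv]
      simp only [List.map_cons, List.sum_cons] at ih' ⊢
      rw [abs_of_pos ha]
      linarith

/-- The Euclidean continued fraction of `n/m` (all coefficients positive, last `> 1`)
minimizes the total cost `Σ (|cᵢ| + 1)` among all valid integer continued fraction
representations of `n/m`. -/
theorem euclidean_cf_minimizes_cost (n m : ℤ) (hm : 0 < m) (hnm : m < n)
    (hcop : IsCoprime n m) (b : List ℤ) (hb : b ≠ []) (hbpos : ∀ x ∈ b, 0 < x)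
    (hblast : b.length = 1 ∨ 1 < b.getLast!) (hbval : cfVal b = (n : ℚ) / m)
    (c : List ℤ) (hc : c ≠ []) (hcval : cfVal c = (n : ℚ) / m) (hcvalid : ValidCF c) :
    ((b.map (fun x => |x| + 1)).sum : ℤ) ≤ (c.map (fun x => |x| + 1)).sum := by
  have h1 := euclid_cost b hb hbpos hblast
  have h2 := cost_ge c hc hcvalid
  rw [h1, hbval, ← hcval]
  exact h2
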